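/- For every finite-dimensional normed space X one has γ(X) < 2; that is, there exist r < 2 and a subset of X that is simultaneously 2-separated and r-dense. -/

import Mathlib

open Set Metric ENNReal

universe u

/-- A set `P` in a normed space is `r`-separated if `‖x - y‖ ≥ r`
for all distinct `x, y ∈ P`. -/
def IsRSeparated {X : Type u} [NormedAddCommGroup X] (r : ℝ) (P : Set X) : Prop :=
  ∀ x ∈ P, ∀ y ∈ P, x ≠ y → r ≤ ‖x - y‖

/-- A set `P` in a normed space is `r`-dense if every point of the space is within
distance `r` of some point of `P`. -/
def IsRDense {X : Type u} [NormedAddCommGroup X] (r : ℝ) (P : Set X) : Prop :=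
  ∀ x : X, ∃ p ∈ P, ‖x - p‖ ≤ r

/-- The simultaneous packing and covering constant `γ(X)`: the infimum of all `r > 0`
for which `X` contains a set that is simultaneously `2`-separated and `r`-dense. -/
noncomputable def packingCovering (X : Type u) [NormedAddCommGroup X] : ℝ :=
  sInf {r : ℝ | 0 < r ∧ ∃ P : Set X, IsRSeparated 2 P ∧ IsRDense r P}

/-- The lattice simultaneous packing and covering constant `γ*(X)`: the infimum of all
`r > 0` for which `X` contains an additive subgroup that is simultaneously `2`-separated
and `r`-dense. -/
noncomputable def packingCoveringStar (X : Type u) [NormedAddCommGroup X] : ℝ :=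
  sInf {r : ℝ | 0 < r ∧ ∃ D : AddSubgroup X,
    IsRSeparated 2 (D : Set X) ∧ IsRDense r (D : Set X)}

/-- The Kottman constant `K(X)`: the supremum of all `r > 0` such that the closed unit
ball of `X` contains an infinite `r`-separated set. -/
noncomputable def kottman (X : Type u) [NormedAddCommGroup X] : ℝ :=
  sSup {r : ℝ | 0 < r ∧ ∃ P : Set X,
    P ⊆ closedBall (0 : X) 1 ∧ P.Infinite ∧ IsRSeparated r P}

/-- The `κ`-Kottman constant `K(X; κ)`: the supremum of all `r > 0` such that the closed
unit ball of `X` contains an `r`-separated set of cardinality `κ`. -/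
noncomputable def kottmanCard (X : Type u) [NormedAddCommGroup X] (κ : Cardinal.{u}) : ℝ :=
  sSup {r : ℝ | 0 < r ∧ ∃ P : Set X,
    P ⊆ closedBall (0 : X) 1 ∧ Cardinal.mk ↥P = κ ∧ IsRSeparated r P}

/-- The density character of a topological space: the smallest cardinality of a dense
subset. -/
noncomputable def densChar (X : Type u) [TopologicalSpace X] : Cardinal.{u} :=
  sInf {c : Cardinal.{u} | ∃ s : Set X, Dense s ∧ Cardinal.mk ↥s = c}

/-- The modulus of local uniform rotundity `δ_X(x₀, ε)` at a point `x₀`. -/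
noncomputable def lurModulus {X : Type u} [NormedAddCommGroup X] (x₀ : X) (ε : ℝ) : ℝ :=
  sInf {d : ℝ | ∃ y : X, ‖y‖ ≤ 1 ∧ ε ≤ ‖x₀ - y‖ ∧ d = 1 - ‖x₀ + y‖ / 2}

/-- `x₀` is a LUR (locally uniformly rotund) point of the unit ball of `X` if it lies on
the unit sphere and `δ_X(x₀, ε) > 0` for every `ε ∈ (0, 2]`. -/
def IsLURPoint {X : Type u} [NormedAddCommGroup X] (x₀ : X) : Prop :=
  ‖x₀‖ = 1 ∧ ∀ ε : ℝ, 0 < ε → ε ≤ 2 → 0 < lurModulus x₀ ε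

/-- The modulus of convexity `δ_X(ε)` of a normed space `X`. -/
noncomputable def convexityModulus (X : Type u) [NormedAddCommGroup X] (ε : ℝ) : ℝ :=
  sInf {d : ℝ | ∃ x y : X, ‖x‖ ≤ 1 ∧ ‖y‖ ≤ 1 ∧ ε ≤ ‖x - y‖ ∧ d = 1 - ‖x + y‖ / 2}

/-- The tangential modulus of convexity `φ_X(t)`, defined through Birkhoff-James
orthogonality: `φ_X(t) = inf {‖x + t v‖ - 1 : x, v ∈ S_X, x ⊥_BJ v}`. -/
noncomputable def tangentialModulus (X : Type u) [NormedAddCommGroup X]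
    [NormedSpace ℝ X] (t : ℝ) : ℝ :=
  sInf {d : ℝ | ∃ x v : X, ‖x‖ = 1 ∧ ‖v‖ = 1 ∧
    (∀ lam : ℝ, ‖x‖ ≤ ‖x + lam • v‖) ∧ d = ‖x + t • v‖ - 1}

/-- `φ : [0,∞) → [0,∞)` is a positive modulus: `φ(0) = 0`, `φ` is continuous at `0`,
`t ↦ φ(t)/t` is non-decreasing on `(0,∞)`, and `φ(t) > 0` for `t > 0`. -/
def IsPositiveModulus (φ : ℝ → ℝ) : Prop :=
  φ 0 = 0 ∧ Filter.Tendsto φ (nhdsWithin 0 (Set.Ici 0)) (nhds 0) ∧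
    (∀ s t : ℝ, 0 < s → s ≤ t → φ s / s ≤ φ t / t) ∧ ∀ t : ℝ, 0 < t → 0 < φ t

/-- The positive modulus `φ_p(t) = (1 + t^p)^(1/p) - 1` (real exponents). -/
noncomputable def phiP (p : ℝ) (t : ℝ) : ℝ := (1 + t ^ p) ^ (1 / p) - 1

/-- A normed space `X` is `(<κ)-octahedral` if for every `ε > 0` and every closed
subspace `Z` of `X` of density character `< κ` there is a unit vector `x` with
`‖z + λ x‖ ≥ (1 - ε)(‖z‖ + |λ|)` for all `z ∈ Z`, `λ ∈ ℝ`. -/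
def KappaOctahedral (κ : Cardinal.{u}) (X : Type u) [NormedAddCommGroup X]
    [NormedSpace ℝ X] : Prop :=
  ∀ ε : ℝ, 0 < ε → ∀ Z : Submodule ℝ X, IsClosed (Z : Set X) → densChar ↥Z < κ →
    ∃ x : X, ‖x‖ = 1 ∧ ∀ z ∈ Z, ∀ lam : ℝ, (1 - ε) * (‖z‖ + |lam|) ≤ ‖z + lam • x‖

/-- A normed space `X` is `(<κ)-φ-octahedral` if for every `ε > 0` and every closed
subspace `Z` of `X` of density character `< κ` there is a unit vector `x` with
`‖z + λ x‖ ≥ (1 - ε)(1 + φ(|λ|))` for all `z` in the unit sphere of `Z` and `λ ∈ ℝ`. -/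
def PhiOctahedral (κ : Cardinal.{u}) (φ : ℝ → ℝ) (X : Type u) [NormedAddCommGroup X]
    [NormedSpace ℝ X] : Prop :=
  ∀ ε : ℝ, 0 < ε → ∀ Z : Submodule ℝ X, IsClosed (Z : Set X) → densChar ↥Z < κ →
    ∃ x : X, ‖x‖ = 1 ∧ ∀ z ∈ Z, ‖z‖ = 1 →
      ∀ lam : ℝ, (1 - ε) * (1 + φ |lam|) ≤ ‖z + lam • x‖

/-- For every finite-dimensional normed space `X` one has `γ(X) < 2`;
that is, there exist `r < 2` and a subset of `X` that is simultaneously `2`-separated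
and `r`-dense. -/
theorem gamma_lt_two_of_finiteDimensional {X : Type u} [NormedAddCommGroup X]
    [NormedSpace ℝ X] [FiniteDimensional ℝ X] :
    packingCovering X < 2 ∧
      ∃ r : ℝ, r < 2 ∧ ∃ P : Set X, IsRSeparated 2 P ∧ IsRDense r P := by
  classical
  set n := Module.finrank ℝ X with hn
  let b : Module.Basis (Fin n) ℝ X := Module.finBasis ℝ X
  -- coordinate functionals
  let f : Fin n → X →L[ℝ] ℝ := fun i => LinearMap.toContinuousLinearMap (b.coord i)
  let C : ℝ := 1 + ∑ i, ‖f i‖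
  have hC1 : (1 : ℝ) ≤ C := by
    have : (0:ℝ) ≤ ∑ i, ‖f i‖ := Finset.sum_nonneg fun i _ => norm_nonneg _
    simp only [C]; linarith
  have hCi : ∀ i, ‖f i‖ ≤ C := by
    intro i
    have h1 : ‖f i‖ ≤ ∑ j, ‖f j‖ :=
      Finset.single_le_sum (fun j _ => norm_nonneg (f j)) (Finset.mem_univ i)
    simp only [C]; linarith
  set R : ℝ := 2 * C with hR
  have hRpos : 0 < R := by simp only [hR]; linarith
  -- the lattice
  let v : (Fin n → ℤ) → X := fun m => ∑ i, ((m i : ℝ) * R) • b i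
  have hrepr : ∀ m i, b.repr (v m) i = (m i : ℝ) * R := by
    intro m i
    have := b.repr_sum_self (fun i => (m i : ℝ) * R)
    simp only [v]
    rw [congrFun this i]
  have hvadd : ∀ m m', v m + v m' = v (m + m') := by
    intro m m'
    simp only [v, ← Finset.sum_add_distrib, ← add_smul]
    refine Finset.sum_congr rfl fun i _ => ?_
    congr 1
    push_cast [Pi.add_apply]
    ring
  have hvsub : ∀ m m', v m - v m' = v (m - m') := by
    intro m m'
    simp only [v, ← Finset.sum_sub_distrib, ← sub_smul]
    refine Finset.sum_congr rfl fun i _ => ?_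
    congr 1
    push_cast [Pi.sub_apply]
    ring
  have hv0 : v 0 = 0 := by simp [v]
  have hvneg : ∀ m, v (-m) = -v m := by
    intro m
    have h := hvsub 0 m
    rw [hv0, zero_sub, zero_sub] at h
    exact h.symm
  -- separation of lattice points
  have hsep : ∀ m : Fin n → ℤ, m ≠ 0 → 2 ≤ ‖v m‖ := by
    intro m hm
    obtain ⟨i, hi⟩ : ∃ i, m i ≠ 0 := by
      by_contra h; push_neg at h; exact hm (funext h)
    have h1 : |(m i : ℝ) * R| = |b.repr (v m) i| := by rw [hrepr]
    have h2 : |b.repr (v m) i| ≤ ‖f i‖ * ‖v m‖ := by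
      have := (f i).le_opNorm (v m)
      simpa [f, Real.norm_eq_abs, Module.Basis.coord_apply] using this
    have h3 : R ≤ |(m i : ℝ) * R| := by
      rw [abs_mul, abs_of_pos hRpos]
      have : (1:ℝ) ≤ |(m i : ℝ)| := by
        rw [← Int.cast_abs]; exact_mod_cast Int.one_le_abs hi
      nlinarith
    have h4 : ‖f i‖ * ‖v m‖ ≤ C * ‖v m‖ :=
      mul_le_mul_of_nonneg_right (hCi i) (norm_nonneg _)
    have : R ≤ C * ‖v m‖ := by linarith
    rw [hR] at this
    nlinarith [norm_nonneg (v m)]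
  let Λ : Set X := Set.range v
  -- the family of admissible sets
  let S : Set (Set X) := {P | IsRSeparated 2 P ∧ ∀ p ∈ P, ∀ l ∈ Λ, p + l ∈ P}
  have hΛS : Λ ∈ S := by
    constructor
    · rintro x ⟨m, rfl⟩ y ⟨m', rfl⟩ hxy
      rw [hvsub]
      apply hsep
      intro h
      apply hxy
      have : m = m' := by
        have := sub_eq_zero.mp h
        funext i; have := congrFun this i
        simpa [Pi.sub_apply, sub_eq_zero] using this
      rw [this]
    · rintro p ⟨m, rfl⟩ l ⟨m', rfl⟩
      exact ⟨m + m', (hvadd m m').symm⟩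
  obtain ⟨M, hΛM, hMmax⟩ := zorn_subset_nonempty S
    (fun c hcS hchain hcne => by
      refine ⟨⋃₀ c, ⟨?_, ?_⟩, fun s hs => subset_sUnion_of_mem hs⟩
      · rintro x ⟨s, hs, hxs⟩ y ⟨t, ht, hyt⟩ hxy
        rcases hchain.total hs ht with h | h
        · exact (hcS ht).1 x (h hxs) y hyt hxy
        · exact (hcS hs).1 x hxs y (h hyt) hxy
      · rintro p ⟨s, hs, hps⟩ l hl
        exact ⟨s, hs, (hcS hs).2 p hps l hl⟩) Λ hΛS
  have hMS : M ∈ S := hMmax.prop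
  have hMne : M.Nonempty := ⟨v 0, hΛM ⟨0, rfl⟩⟩
  -- maximality gives pointwise density < 2
  have hdense : ∀ x : X, ∃ p ∈ M, dist x p < 2 := by
    intro x
    by_contra h
    push_neg at h
    have hxM : x ∉ M := fun hx => absurd (by simpa using h x hx) (by norm_num : ¬ (2:ℝ) ≤ 0)
    have hMS' : M ∪ (fun l => x + l) '' Λ ∈ S := by
      constructor
      · rintro a (haM | ⟨l1, hl1, rfl⟩) c (hcM | ⟨l2, hl2, rfl⟩) hac
        · exact hMS.1 a haM c hcM hac
        · rw [show a - (x + l2) = -(x - (a + -l2)) by abel, norm_neg]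
          have : a + -l2 ∈ M := by
            obtain ⟨m2, rfl⟩ := hl2
            exact hMS.2 a haM _ ⟨-m2, hvneg m2⟩
          have := h _ this
          rwa [dist_eq_norm] at this
        · have : c + -l1 ∈ M := by
            obtain ⟨m1, rfl⟩ := hl1
            exact hMS.2 c hcM _ ⟨-m1, hvneg m1⟩
          have := h _ this
          rw [dist_eq_norm] at this
          rw [show x + l1 - c = x - (c + -l1) by abel]
          exact this
        · obtain ⟨m1, rfl⟩ := hl1
          obtain ⟨m2, rfl⟩ := hl2
          rw [show x + v m1 - (x + v m2) = v m1 - v m2 by abel, hvsub]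
          apply hsep
          intro hm
          apply hac
          have : m1 = m2 := by rwa [sub_eq_zero] at hm
          rw [this]
      · rintro p (hpM | ⟨l1, hl1, rfl⟩) l hl
        · exact Or.inl (hMS.2 p hpM l hl)
        · refine Or.inr ⟨l1 + l, ?_, (add_assoc x l1 l).symm⟩
          obtain ⟨m1, rfl⟩ := hl1
          obtain ⟨m, rfl⟩ := hl
          exact ⟨m1 + m, (hvadd m1 m).symm⟩
    have heq := hMmax.eq_of_subset hMS' Set.subset_union_left
    apply hxM
    rw [heq]
    exact Or.inr ⟨v 0, ⟨0, rfl⟩, by simp [v]⟩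
  -- the compact fundamental domain
  let K : Set X := {w : X | ∀ i, b.repr w i ∈ Set.Icc (0:ℝ) R}
  have hcont : ∀ i : Fin n, Continuous fun w : X => b.repr w i := by
    intro i
    have : (fun w : X => b.repr w i) = f i := by funext w; simp [f, Module.Basis.coord_apply]
    rw [this]; exact (f i).continuous
  have hKclosed : IsClosed K := by
    have : K = ⋂ i, (fun w : X => b.repr w i) ⁻¹' Set.Icc (0:ℝ) R := by
      ext w; simp [K, Set.mem_iInter]
    rw [this]
    exact isClosed_iInter fun i => (isClosed_Icc).preimage (hcont i)
  have hKsub : K ⊆ closedBall (0:X) (∑ i, R * ‖b i‖) := by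
    intro w hw
    rw [mem_closedBall, dist_zero_right]
    calc ‖w‖ = ‖∑ i, b.repr w i • b i‖ := by rw [b.sum_repr w]
      _ ≤ ∑ i, ‖b.repr w i • b i‖ := norm_sum_le _ _
      _ ≤ ∑ i, R * ‖b i‖ := by
          apply Finset.sum_le_sum
          intro i _
          rw [norm_smul, Real.norm_eq_abs, abs_of_nonneg (hw i).1]
          exact mul_le_mul_of_nonneg_right (hw i).2 (norm_nonneg _)
  have hKcompact : IsCompact K :=
    (isCompact_closedBall (0:X) _).of_isClosed_subset hKclosed hKsub
  have hK0 : (0:X) ∈ K := by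
    intro i; simp [Set.mem_Icc, hRpos.le]
  -- decomposition: every point is a lattice translate of a point of K
  have hdecomp : ∀ x : X, ∃ l ∈ Λ, x - l ∈ K := by
    intro x
    refine ⟨v (fun i => ⌊b.repr x i / R⌋), ⟨_, rfl⟩, ?_⟩
    intro i
    rw [map_sub, Finsupp.sub_apply, hrepr]
    constructor
    · exact Int.sub_floor_div_mul_nonneg (b.repr x i) hRpos
    · exact le_of_lt (Int.sub_floor_div_mul_lt (b.repr x i) hRpos)
  -- translation invariance of infDist
  have htrans : ∀ l ∈ Λ, ∀ k : X, infDist (k + l) M ≤ infDist k M := by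
    intro l hl k
    have himg : (fun y => y + l) '' M ⊆ M := by
      rintro _ ⟨p, hp, rfl⟩; exact hMS.2 p hp l hl
    have hiso : Isometry (fun y : X => y + l) :=
      Isometry.of_dist_eq fun a c => by simp [dist_eq_norm]
    calc infDist (k + l) M ≤ infDist (k + l) ((fun y => y + l) '' M) :=
          infDist_le_infDist_of_subset himg (hMne.image _)
      _ = infDist k M := infDist_image hiso
  -- max of infDist on K
  obtain ⟨x₀, hx₀K, hx₀max⟩ := hKcompact.exists_isMaxOn ⟨0, hK0⟩
    ((continuous_infDist_pt M).continuousOn)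
  have hgx₀ : infDist x₀ M < 2 := by
    obtain ⟨p, hpM, hp⟩ := hdense x₀
    exact lt_of_le_of_lt (infDist_le_dist_of_mem hpM) hp
  set r : ℝ := (infDist x₀ M + 2) / 2 with hr
  have hg0 : 0 ≤ infDist x₀ M := infDist_nonneg
  have hrpos : 0 < r := by rw [hr]; linarith
  have hrlt2 : r < 2 := by rw [hr]; linarith
  have hgr : infDist x₀ M < r := by rw [hr]; linarith
  have hRdense : IsRDense r M := by
    intro x
    obtain ⟨l, hl, hk⟩ := hdecomp x
    have h1 : infDist x M ≤ infDist (x - l) M := by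
      have := htrans l hl (x - l)
      simpa using this
    have h2 : infDist (x - l) M ≤ infDist x₀ M := hx₀max hk
    have : infDist x M < r := lt_of_le_of_lt (h1.trans h2) hgr
    obtain ⟨p, hpM, hp⟩ := (infDist_lt_iff hMne).mp this
    exact ⟨p, hpM, by rw [← dist_eq_norm]; exact hp.le⟩
  refine ⟨?_, r, hrlt2, M, hMS.1, hRdense⟩
  have hmem : r ∈ {r : ℝ | 0 < r ∧ ∃ P : Set X, IsRSeparated 2 P ∧ IsRDense r P} :=
    ⟨hrpos, M, hMS.1, hRdense⟩
  have hbdd : BddBelow {r : ℝ | 0 < r ∧ ∃ P : Set X, IsRSeparated 2 P ∧ IsRDense r P} :=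
    ⟨0, fun y hy => hy.1.le⟩
  exact lt_of_le_of_lt (csInf_le hbdd hmem) hrlt2
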